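/- Let U be a nonempty closed subset of ℝᵈ and f : ℝⁿ × U → ℝⁿ a mapping satisfying: (i) f is of class C¹ on ℝⁿ × U; (ii) there exists u⁰ ∈ U with f(0, u⁰) = 0 and U is star-shaped with respect to u⁰; (iii) lim_{x → 0} ( sup_{u ∈ B} ‖Df(x, u)‖ ) = 0 for every nonempty bounded subset B ⊂ U. Define the operator 𝒯(x, u) := (x_{t+1} − f(x_t, u_t))_{t∈ℕ}. Then 𝒯 is a continuously Fréchet differentiable mapping from c₀(ℕ, ℝⁿ) × ℓ∞(ℕ, U) into c₀(ℕ, ℝⁿ), and for all x ∈ c₀(ℕ, ℝⁿ), u ∈ ℓ∞(ℕ, U), δx ∈ c₀(ℕ, ℝⁿ), δu ∈ ℓ∞(ℕ, ℝᵈ), one has D𝒯(x, u)(δx, δu) = (δx_{t+1} − D₁f(x_t, u_t)δx_t − D₂f(x_t, u_t)δu_t)_{t∈ℕ}. -/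

import Mathlib

open Filter Topology Bornology Set ZeroAtInfty
open scoped ENNReal

noncomputable section

instance : Fact ((1 : ℝ≥0∞) ≤ ⊤) := ⟨le_top⟩

open Metric

set_option maxHeartbeats 2000000

section Aux

variable {n d : ℕ}

/-- The open superset of `ℓ∞(ℕ, U)` on which everything works. -/
def Oset (U1 : Set (Fin d → ℝ)) : Set (lp (fun _ : ℕ => Fin d → ℝ) ⊤) :=
  {u | closure (Set.range fun t : ℕ => u t) ⊆ U1}

lemma range_bdd (u : lp (fun _ : ℕ => Fin d → ℝ) ⊤) :
    (Set.range fun t : ℕ => u t) ⊆ closedBall 0 ‖u‖ := by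
  rintro - ⟨t, rfl⟩
  simpa [mem_closedBall, dist_eq_norm] using lp.norm_apply_le_norm (ENNReal.top_ne_zero) u t

lemma Kcpt (u : lp (fun _ : ℕ => Fin d → ℝ) ⊤) :
    IsCompact (closure (Set.range fun t : ℕ => u t)) :=
  ((isBounded_closedBall.subset (range_bdd u)).isCompact_closure)

lemma Oset_open {U1 : Set (Fin d → ℝ)} (hU1 : IsOpen U1) : IsOpen (Oset U1) := by
  rw [Metric.isOpen_iff]
  intro u hu
  obtain ⟨δ, hδ, hsub⟩ := (Kcpt u).exists_thickening_subset_open hU1 hu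
  refine ⟨δ / 2, by positivity, fun v hv => ?_⟩
  have h1 : (Set.range fun t : ℕ => v t) ⊆
      cthickening (δ / 2) (closure (Set.range fun t : ℕ => u t)) := by
    rintro - ⟨t, rfl⟩
    refine mem_cthickening_of_dist_le _ (u t) _ _ (subset_closure ⟨t, rfl⟩) ?_
    have : v t - u t = (v - u : lp (fun _ : ℕ => Fin d → ℝ) ⊤) t := by
      simp [lp.coeFn_sub]
    rw [dist_eq_norm, this]
    calc ‖(v - u : lp (fun _ : ℕ => Fin d → ℝ) ⊤) t‖ ≤ ‖v - u‖ :=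
        lp.norm_apply_le_norm (ENNReal.top_ne_zero) _ t
      _ ≤ δ / 2 := by rw [← dist_eq_norm]; exact hv.le
  refine (closure_minimal h1 isClosed_cthickening).trans ?_
  exact (cthickening_subset_thickening' hδ (by linarith) _).trans hsub

lemma c0_apply_le (x : C₀(ℕ, Fin n → ℝ)) (t : ℕ) : ‖x t‖ ≤ ‖x‖ := by
  rw [← ZeroAtInftyContinuousMap.norm_toBCF_eq_norm]
  exact BoundedContinuousFunction.norm_coe_le_norm x.toBCF t

lemma c0_norm_le {x : C₀(ℕ, Fin n → ℝ)} {C : ℝ} (hC : 0 ≤ C) (h : ∀ t, ‖x t‖ ≤ C) :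
    ‖x‖ ≤ C := by
  rw [← ZeroAtInftyContinuousMap.norm_toBCF_eq_norm]
  exact (BoundedContinuousFunction.norm_le hC).2 h

lemma c0_tendsto (x : C₀(ℕ, Fin n → ℝ)) : Tendsto (fun t => x t) atTop (𝓝 0) := by
  have := x.zero_at_infty'
  rwa [cocompact_eq_cofinite, Nat.cofinite_eq_atTop] at this

theorem key_theorem {U1 : Set (Fin d → ℝ)} (hU1 : IsOpen U1)
    (G : (Fin n → ℝ) × (Fin d → ℝ) → (Fin n → ℝ))
    (D : (Fin n → ℝ) × (Fin d → ℝ) → ((Fin n → ℝ) × (Fin d → ℝ)) →L[ℝ] (Fin n → ℝ))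
    (hG : ∀ q : (Fin n → ℝ) × (Fin d → ℝ), q.2 ∈ U1 → HasFDerivAt G (D q) q)
    (hDc : ContinuousOn D (Set.univ ×ˢ U1))
    (hG0 : ∀ w, G (0, w) = 0)
    (hD0 : ∀ w ∈ U1, ∀ b : Fin d → ℝ, D (0, w) (0, b) = 0) :
    ∃ T : C₀(ℕ, Fin n → ℝ) × lp (fun _ : ℕ => Fin d → ℝ) ⊤ → C₀(ℕ, Fin n → ℝ),
      (∀ x u, u ∈ Oset U1 → ∀ t : ℕ, T (x, u) t = x (t + 1) - G (x t, u t)) ∧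
      ContDiffOn ℝ 1 T (Set.univ ×ˢ Oset U1) ∧
      (∀ x u, u ∈ Oset U1 → ∀ δx δu, ∀ t : ℕ,
        fderiv ℝ T (x, u) (δx, δu) t = δx (t + 1) - D (x t, u t) (δx t, δu t)) := by
  classical
  -- a uniform bound for `D` on compact subsets
  have bound : ∀ s : Set ((Fin n → ℝ) × (Fin d → ℝ)), IsCompact s → s ⊆ Set.univ ×ˢ U1 →
      ∃ M : ℝ, 0 ≤ M ∧ ∀ q ∈ s, ‖D q‖ ≤ M := by
    intro s hs hsub
    obtain ⟨M, hM⟩ := hs.exists_bound_of_continuousOn (hDc.mono hsub)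
    exact ⟨max M 0, le_max_right _ _, fun q hq => (hM q hq).trans (le_max_left _ _)⟩
  -- a mean value bound for `G`
  have mvtG : ∀ (w : Fin d → ℝ), w ∈ U1 → ∀ (R : ℝ) (M : ℝ),
      (∀ y : Fin n → ℝ, ‖y‖ ≤ R → ‖D (y, w)‖ ≤ M) →
      ∀ y : Fin n → ℝ, ‖y‖ ≤ R → ‖G (y, w)‖ ≤ M * ‖y‖ := by
    intro w hw R M hM y hy
    have h0R : (0 : ℝ) ≤ R := le_trans (norm_nonneg y) hy
    have := Convex.norm_image_sub_le_of_norm_hasFDerivWithin_le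
      (f := fun z : Fin n → ℝ => G (z, w))
      (f' := fun z => (D (z, w)).comp
        ((ContinuousLinearMap.id ℝ (Fin n → ℝ)).prod (0 : (Fin n → ℝ) →L[ℝ] (Fin d → ℝ))))
      (C := M) (s := closedBall (0 : Fin n → ℝ) R)
      (x := 0) (y := y) ?_ ?_ (convex_closedBall _ _) (mem_closedBall_self h0R)
      (by simpa [mem_closedBall, dist_eq_norm] using hy)
    · simpa [hG0 w] using this
    · intro z hz
      exact (((hG (z, w) hw).comp z
        ((hasFDerivAt_id z).prodMk (hasFDerivAt_const w z))).hasFDerivWithinAt)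
    · intro z hz
      have hz' : ‖z‖ ≤ R := by simpa [mem_closedBall, dist_eq_norm] using hz
      refine ContinuousLinearMap.opNorm_le_bound _
        (le_trans (norm_nonneg _) (hM 0 (by simpa using h0R))) ?_
      intro v
      calc ‖D (z, w) (v, 0)‖ ≤ ‖D (z, w)‖ * ‖((v, 0) : (Fin n → ℝ) × (Fin d → ℝ))‖ :=
            (D (z, w)).le_opNorm _
        _ ≤ M * ‖v‖ := by
            rw [Prod.norm_def]
            simp only [norm_zero]
            rw [max_eq_left (norm_nonneg v)]
            exact mul_le_mul_of_nonneg_right (hM z hz') (norm_nonneg v)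
  -- membership facts
  have humem : ∀ (u : lp (fun _ : ℕ => Fin d → ℝ) ⊤) (t : ℕ),
      u t ∈ closure (Set.range fun s : ℕ => u s) := fun u t => subset_closure ⟨t, rfl⟩
  have hCs : ∀ (x : C₀(ℕ, Fin n → ℝ)) (u : lp (fun _ : ℕ => Fin d → ℝ) ⊤), u ∈ Oset U1 →
      IsCompact (closedBall (0 : Fin n → ℝ) ‖x‖ ×ˢ closure (Set.range fun t : ℕ => u t)) ∧
      (closedBall (0 : Fin n → ℝ) ‖x‖ ×ˢ closure (Set.range fun t : ℕ => u t))
        ⊆ Set.univ ×ˢ U1 := by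
    intro x u hu
    exact ⟨(isCompact_closedBall _ _).prod (Kcpt u), Set.prod_mono (Set.subset_univ _) hu⟩
  -- zero at infinity of the T values
  have hTzero : ∀ (x : C₀(ℕ, Fin n → ℝ)) (u : lp (fun _ : ℕ => Fin d → ℝ) ⊤), u ∈ Oset U1 →
      Tendsto (fun t => x (t + 1) - G (x t, u t)) atTop (𝓝 0) := by
    intro x u hu
    obtain ⟨M, hM0, hM⟩ := bound _ (hCs x u hu).1 (hCs x u hu).2
    have hGb : ∀ t : ℕ, ‖G (x t, u t)‖ ≤ M * ‖x t‖ := by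
      intro t
      refine mvtG (u t) (hu (humem u t)) ‖x‖ M (fun y hy => ?_) (x t) (c0_apply_le x t)
      exact hM (y, u t) ⟨by simpa [mem_closedBall, dist_eq_norm] using hy, humem u t⟩
    have hb : Tendsto (fun t : ℕ => ‖x (t + 1)‖ + M * ‖x t‖) atTop (𝓝 0) := by
      have h1 : Tendsto (fun t : ℕ => x (t + 1)) atTop (𝓝 0) :=
        (c0_tendsto x).comp (tendsto_add_atTop_nat 1)
      simpa using h1.norm.add ((c0_tendsto x).norm.const_mul M)
    refine squeeze_zero_norm (fun t => ?_) hb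
    exact (norm_sub_le _ _).trans (add_le_add le_rfl (hGb t))
  -- the operator T
  let T : C₀(ℕ, Fin n → ℝ) × lp (fun _ : ℕ => Fin d → ℝ) ⊤ → C₀(ℕ, Fin n → ℝ) := fun p =>
    if h : p.2 ∈ Oset U1 then
      { toFun := fun t => p.1 (t + 1) - G (p.1 t, p.2 t),
        continuous_toFun := continuous_of_discreteTopology,
        zero_at_infty' := by rw [cocompact_eq_cofinite, Nat.cofinite_eq_atTop]; exact hTzero p.1 p.2 h }
    else 0
  have hTval : ∀ (x : C₀(ℕ, Fin n → ℝ)) (u : lp (fun _ : ℕ => Fin d → ℝ) ⊤), u ∈ Oset U1 →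
      ∀ t : ℕ, T (x, u) t = x (t + 1) - G (x t, u t) := by
    intro x u h t
    simp only [T, dif_pos h]
    rfl
  -- zero at infinity of the derivative values
  have hLzero : ∀ (x : C₀(ℕ, Fin n → ℝ)) (u : lp (fun _ : ℕ => Fin d → ℝ) ⊤), u ∈ Oset U1 →
      ∀ (δx : C₀(ℕ, Fin n → ℝ)) (δu : lp (fun _ : ℕ => Fin d → ℝ) ⊤),
      Tendsto (fun t => δx (t + 1) - D (x t, u t) (δx t, δu t)) atTop (𝓝 0) := by
    intro x u hu δx δu
    obtain ⟨M, hM0, hM⟩ := bound _ (hCs x u hu).1 (hCs x u hu).2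
    have hxmem : ∀ t : ℕ, ((x t, u t) : (Fin n → ℝ) × (Fin d → ℝ)) ∈
        closedBall (0 : Fin n → ℝ) ‖x‖ ×ˢ closure (Set.range fun s : ℕ => u s) := by
      intro t
      exact ⟨by simpa [mem_closedBall, dist_eq_norm] using c0_apply_le x t, humem u t⟩
    have h0mem : ∀ t : ℕ, ((0, u t) : (Fin n → ℝ) × (Fin d → ℝ)) ∈
        closedBall (0 : Fin n → ℝ) ‖x‖ ×ˢ closure (Set.range fun s : ℕ => u s) := by
      intro t
      exact ⟨mem_closedBall_self (norm_nonneg x), humem u t⟩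
    have hdiff : Tendsto (fun t : ℕ => ‖D (x t, u t) - D (0, u t)‖) atTop (𝓝 0) := by
      have hUC := ((hCs x u hu).1).uniformContinuousOn_of_continuous (hDc.mono (hCs x u hu).2)
      rw [Metric.uniformContinuousOn_iff] at hUC
      rw [NormedAddCommGroup.tendsto_nhds_zero]
      intro ε hε
      obtain ⟨δ, hδ, hd⟩ := hUC ε hε
      have hev : ∀ᶠ t : ℕ in atTop, ‖x t‖ < δ :=
        NormedAddCommGroup.tendsto_nhds_zero.mp (c0_tendsto x) δ hδ
      filter_upwards [hev] with t ht
      have hdist : dist ((x t, u t) : (Fin n → ℝ) × (Fin d → ℝ)) (0, u t) < δ := by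
        rw [Prod.dist_eq]
        simp only [dist_self, dist_eq_norm, sub_zero]
        exact max_lt ht hδ
      have := hd _ (hxmem t) _ (h0mem t) hdist
      rw [dist_eq_norm] at this
      rwa [norm_norm]
    have hptw : ∀ t : ℕ, ‖δx (t + 1) - D (x t, u t) (δx t, δu t)‖ ≤
        ‖δx (t + 1)‖ + (M * ‖δx t‖ + ‖D (x t, u t) - D (0, u t)‖ * ‖δu‖) := by
      intro t
      refine (norm_sub_le _ _).trans (add_le_add le_rfl ?_)
      have hsplit : ((δx t, δu t) : (Fin n → ℝ) × (Fin d → ℝ)) = (δx t, 0) + (0, δu t) := by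
        simp [Prod.ext_iff]
      rw [hsplit, map_add]
      refine (norm_add_le _ _).trans (add_le_add ?_ ?_)
      · calc ‖D (x t, u t) (δx t, 0)‖
            ≤ ‖D (x t, u t)‖ * ‖((δx t, 0) : (Fin n → ℝ) × (Fin d → ℝ))‖ :=
              (D (x t, u t)).le_opNorm _
          _ ≤ M * ‖δx t‖ := by
              rw [Prod.norm_def]
              simp only [norm_zero]
              rw [max_eq_left (norm_nonneg _)]
              exact mul_le_mul_of_nonneg_right (hM _ (hxmem t)) (norm_nonneg _)
      · have hz : D (0, u t) (0, δu t) = 0 := hD0 (u t) (hu (humem u t)) (δu t)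
        have heq : D (x t, u t) (0, δu t)
            = (D (x t, u t) - D (0, u t)) (0, δu t) := by
          simp [ContinuousLinearMap.sub_apply, hz]
        rw [heq]
        calc ‖(D (x t, u t) - D (0, u t)) (0, δu t)‖
            ≤ ‖D (x t, u t) - D (0, u t)‖ * ‖((0, δu t) : (Fin n → ℝ) × (Fin d → ℝ))‖ :=
              (D (x t, u t) - D (0, u t)).le_opNorm _
          _ ≤ ‖D (x t, u t) - D (0, u t)‖ * ‖δu‖ := by
              rw [Prod.norm_def]
              simp only [norm_zero]
              rw [max_eq_right (norm_nonneg _)]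
              exact mul_le_mul_of_nonneg_left
                (lp.norm_apply_le_norm ENNReal.top_ne_zero δu t) (norm_nonneg _)
    have hb : Tendsto (fun t : ℕ => ‖δx (t + 1)‖
        + (M * ‖δx t‖ + ‖D (x t, u t) - D (0, u t)‖ * ‖δu‖)) atTop (𝓝 0) := by
      have h1 := ((c0_tendsto δx).comp (tendsto_add_atTop_nat 1)).norm
      have h2 := (c0_tendsto δx).norm.const_mul M
      have h3 := hdiff.mul_const ‖δu‖
      simpa using h1.add (h2.add h3)
    exact squeeze_zero_norm hptw hb
  -- the candidate derivative maps
  have hLex : ∀ (x : C₀(ℕ, Fin n → ℝ)) (u : lp (fun _ : ℕ => Fin d → ℝ) ⊤), u ∈ Oset U1 →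
      ∃ L : C₀(ℕ, Fin n → ℝ) × lp (fun _ : ℕ => Fin d → ℝ) ⊤ →L[ℝ] C₀(ℕ, Fin n → ℝ),
      ∀ (δ : C₀(ℕ, Fin n → ℝ) × lp (fun _ : ℕ => Fin d → ℝ) ⊤) (t : ℕ),
        L δ t = δ.1 (t + 1) - D (x t, u t) (δ.1 t, δ.2 t) := by
    intro x u hu
    obtain ⟨M, hM0, hM⟩ := bound _ (hCs x u hu).1 (hCs x u hu).2
    have hxmem : ∀ t : ℕ, ((x t, u t) : (Fin n → ℝ) × (Fin d → ℝ)) ∈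
        closedBall (0 : Fin n → ℝ) ‖x‖ ×ˢ closure (Set.range fun s : ℕ => u s) := fun t =>
      ⟨by simpa [mem_closedBall, dist_eq_norm] using c0_apply_le x t, humem u t⟩
    have hval : ∀ (δ : C₀(ℕ, Fin n → ℝ) × lp (fun _ : ℕ => Fin d → ℝ) ⊤) (t : ℕ),
        ‖δ.1 (t + 1) - D (x t, u t) (δ.1 t, δ.2 t)‖ ≤ (1 + M) * ‖δ‖ := by
      intro δ t
      have h1 : ‖δ.1 (t + 1)‖ ≤ ‖δ‖ := (c0_apply_le δ.1 _).trans (norm_fst_le δ)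
      have h2 : ‖((δ.1 t, δ.2 t) : (Fin n → ℝ) × (Fin d → ℝ))‖ ≤ ‖δ‖ := by
        rw [Prod.norm_def]
        exact max_le ((c0_apply_le δ.1 t).trans (norm_fst_le δ))
          ((lp.norm_apply_le_norm ENNReal.top_ne_zero δ.2 t).trans (norm_snd_le δ))
      have h3 : ‖D (x t, u t) (δ.1 t, δ.2 t)‖ ≤ M * ‖δ‖ :=
        ((D (x t, u t)).le_opNorm _).trans
          (mul_le_mul (hM _ (hxmem t)) h2 (norm_nonneg _) hM0)
      calc ‖δ.1 (t + 1) - D (x t, u t) (δ.1 t, δ.2 t)‖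
          ≤ ‖δ.1 (t + 1)‖ + ‖D (x t, u t) (δ.1 t, δ.2 t)‖ := norm_sub_le _ _
        _ ≤ ‖δ‖ + M * ‖δ‖ := add_le_add h1 h3
        _ = (1 + M) * ‖δ‖ := by ring
    refine ⟨LinearMap.mkContinuous
      { toFun := fun δ =>
          { toFun := fun t => δ.1 (t + 1) - D (x t, u t) (δ.1 t, δ.2 t),
            continuous_toFun := continuous_of_discreteTopology,
            zero_at_infty' := by rw [cocompact_eq_cofinite, Nat.cofinite_eq_atTop]; exact hLzero x u hu δ.1 δ.2 },
        map_add' := by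
          intro δ δ'
          refine DFunLike.ext _ _ fun t => ?_
          simp only [ZeroAtInftyContinuousMap.coe_add, Pi.add_apply,
            ZeroAtInftyContinuousMap.coe_mk, ContinuousMap.coe_mk, Prod.fst_add, Prod.snd_add,
            lp.coeFn_add]
          rw [show ((δ.1 t + δ'.1 t, δ.2 t + δ'.2 t) : (Fin n → ℝ) × (Fin d → ℝ))
            = (δ.1 t, δ.2 t) + (δ'.1 t, δ'.2 t) from rfl, (D (x t, u t)).map_add,
            sub_add_sub_comm]
        map_smul' := by
          intro c δ
          refine DFunLike.ext _ _ fun t => ?_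
          simp only [ZeroAtInftyContinuousMap.coe_smul, Pi.smul_apply,
            ZeroAtInftyContinuousMap.coe_mk, ContinuousMap.coe_mk, Prod.smul_fst, Prod.smul_snd,
            lp.coeFn_smul, RingHom.id_apply]
          rw [show ((c • δ.1 t, c • δ.2 t) : (Fin n → ℝ) × (Fin d → ℝ))
            = c • (δ.1 t, δ.2 t) from rfl, map_smul]
          rw [smul_sub] }
      (1 + M) (fun δ => c0_norm_le (by positivity) (hval δ)), fun δ t => rfl⟩
  choose Lc hLc using hLex
  -- T has Fréchet derivative Lc at every admissible point
  have hHas : ∀ (x : C₀(ℕ, Fin n → ℝ)) (u : lp (fun _ : ℕ => Fin d → ℝ) ⊤)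
      (hu : u ∈ Oset U1), HasFDerivAt T (Lc x u hu) (x, u) := by
    intro x u hu
    set L := Lc x u hu with hLdef
    have hL := hLc x u hu
    obtain ⟨δ₀, hδ₀, hthick⟩ := (Kcpt u).exists_thickening_subset_open hU1 hu
    set K := closure (Set.range fun t : ℕ => u t) with hK
    set K2 := cthickening (δ₀ / 2) K with hK2def
    have hK2cpt : IsCompact K2 := (Kcpt u).cthickening
    have hK2U1 : K2 ⊆ U1 :=
      (cthickening_subset_thickening' hδ₀ (half_lt_self hδ₀) K).trans hthick
    have hKK2 : K ⊆ K2 := self_subset_cthickening K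
    have hCscpt : IsCompact (closedBall (0 : Fin n → ℝ) (‖x‖ + 1) ×ˢ K2) :=
      (isCompact_closedBall _ _).prod hK2cpt
    have hCssub : closedBall (0 : Fin n → ℝ) (‖x‖ + 1) ×ˢ K2 ⊆ Set.univ ×ˢ U1 :=
      Set.prod_mono (Set.subset_univ _) hK2U1
    have hUC := hCscpt.uniformContinuousOn_of_continuous (hDc.mono hCssub)
    rw [Metric.uniformContinuousOn_iff] at hUC
    rw [hasFDerivAt_iff_isLittleO_nhds_zero, Asymptotics.isLittleO_iff]
    intro c hc
    obtain ⟨δ₁, hδ₁, hUCδ⟩ := hUC c hc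
    rw [Metric.eventually_nhds_iff]
    refine ⟨min (min 1 (δ₀ / 2)) δ₁, by positivity, fun δ hδsmall => ?_⟩
    rw [dist_zero_right] at hδsmall
    have hδle1 : ‖δ‖ ≤ 1 :=
      hδsmall.le.trans ((min_le_left _ _).trans (min_le_left _ _))
    have hδhalf : ‖δ‖ ≤ δ₀ / 2 :=
      hδsmall.le.trans ((min_le_left _ _).trans (min_le_right _ _))
    have hδδ₁ : ‖δ‖ < δ₁ := lt_of_lt_of_le hδsmall (min_le_right _ _)
    have hwle : ∀ t : ℕ, ‖((δ.1 t, δ.2 t) : (Fin n → ℝ) × (Fin d → ℝ))‖ ≤ ‖δ‖ := by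
      intro t
      rw [Prod.norm_def]
      exact max_le ((c0_apply_le δ.1 t).trans (norm_fst_le δ))
        ((lp.norm_apply_le_norm ENNReal.top_ne_zero δ.2 t).trans (norm_snd_le δ))
    have hu2 : u + δ.2 ∈ Oset U1 := by
      intro z hz
      refine hK2U1 ?_
      refine closure_minimal ?_ isClosed_cthickening hz
      rintro - ⟨t, rfl⟩
      refine mem_cthickening_of_dist_le _ (u t) _ _ (humem u t) ?_
      show dist ((u + δ.2 : lp (fun _ : ℕ => Fin d → ℝ) ⊤) t) (u t) ≤ δ₀ / 2
      have huv : (u + δ.2 : lp (fun _ : ℕ => Fin d → ℝ) ⊤) t = u t + δ.2 t := by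
        rw [lp.coeFn_add]; rfl
      rw [huv, dist_eq_norm, add_sub_cancel_left]
      exact ((lp.norm_apply_le_norm ENNReal.top_ne_zero δ.2 t).trans (norm_snd_le δ)).trans hδhalf
    have hq : ∀ t : ℕ, ((x t, u t) : (Fin n → ℝ) × (Fin d → ℝ)) ∈
        closedBall (0 : Fin n → ℝ) (‖x‖ + 1) ×ˢ K2 := by
      intro t
      constructor
      · simp only [mem_closedBall, dist_zero_right]
        exact (c0_apply_le x t).trans (by linarith)
      · exact hKK2 (humem u t)
    refine c0_norm_le (mul_nonneg hc.le (norm_nonneg δ)) fun t => ?_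
    have hv : (T ((x, u) + δ) - T (x, u) - L δ) t
        = -(G ((x t, u t) + (δ.1 t, δ.2 t)) - G (x t, u t) - D (x t, u t) (δ.1 t, δ.2 t)) := by
      have hTp : T ((x, u) + δ) t = (x + δ.1) (t + 1) - G ((x + δ.1) t, (u + δ.2) t) := by
        have h1 : ((x, u) + δ) = (x + δ.1, u + δ.2) := rfl
        rw [h1]; exact hTval _ _ hu2 t
      simp only [ZeroAtInftyContinuousMap.coe_sub, Pi.sub_apply]
      rw [hTp, hTval x u hu t, hL δ t]
      simp only [ZeroAtInftyContinuousMap.coe_add, Pi.add_apply, lp.coeFn_add]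
      have h2 : ((x t, u t) + (δ.1 t, δ.2 t) : (Fin n → ℝ) × (Fin d → ℝ))
          = (x t + δ.1 t, u t + (δ.2 : ∀ _ : ℕ, Fin d → ℝ) t) := rfl
      rw [h2]
      abel
    rw [hv, norm_neg]
    have hseg : ∀ z ∈ segment ℝ ((x t, u t) : (Fin n → ℝ) × (Fin d → ℝ))
        ((x t, u t) + (δ.1 t, δ.2 t)),
        z ∈ closedBall (0 : Fin n → ℝ) (‖x‖ + 1) ×ˢ K2 ∧ ‖z - (x t, u t)‖ ≤ ‖δ‖ := by
      intro z hz
      rw [segment_eq_image'] at hz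
      obtain ⟨θ, hθ, rfl⟩ := hz
      rw [add_sub_cancel_left]
      have hθ1 : |θ| ≤ 1 := by
        rw [abs_le]; exact ⟨by linarith [hθ.1], hθ.2⟩
      have hnorm : ‖θ • ((δ.1 t, δ.2 t) : (Fin n → ℝ) × (Fin d → ℝ))‖ ≤ ‖δ‖ := by
        rw [norm_smul, Real.norm_eq_abs]
        calc |θ| * ‖((δ.1 t, δ.2 t) : (Fin n → ℝ) × (Fin d → ℝ))‖
            ≤ 1 * ‖δ‖ := mul_le_mul hθ1 (hwle t) (norm_nonneg _) zero_le_one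
          _ = ‖δ‖ := one_mul _
      constructor
      · constructor
        · simp only [mem_closedBall, dist_zero_right]
          have h1 : ((x t, u t) + θ • ((δ.1 t, δ.2 t) :
              (Fin n → ℝ) × (Fin d → ℝ))).1 = x t + θ • δ.1 t := rfl
          rw [h1]
          calc ‖x t + θ • δ.1 t‖ ≤ ‖x t‖ + ‖θ • δ.1 t‖ := norm_add_le _ _
            _ ≤ ‖x‖ + ‖δ‖ := by
              refine add_le_add (c0_apply_le x t) ?_
              calc ‖θ • δ.1 t‖ = |θ| * ‖δ.1 t‖ := by rw [norm_smul, Real.norm_eq_abs]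
                _ ≤ 1 * ‖δ‖ := mul_le_mul hθ1 ((c0_apply_le δ.1 t).trans (norm_fst_le δ))
                    (norm_nonneg _) zero_le_one
                _ = ‖δ‖ := one_mul _
            _ ≤ ‖x‖ + 1 := by linarith
        · have h2 : ((x t, u t) + θ • ((δ.1 t, δ.2 t) :
              (Fin n → ℝ) × (Fin d → ℝ))).2 = u t + θ • δ.2 t := rfl
          rw [h2]
          refine mem_cthickening_of_dist_le _ (u t) _ _ (humem u t) ?_
          rw [dist_eq_norm, add_sub_cancel_left]
          calc ‖θ • δ.2 t‖ = |θ| * ‖δ.2 t‖ := by rw [norm_smul, Real.norm_eq_abs]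
            _ ≤ 1 * ‖δ‖ := mul_le_mul hθ1
                ((lp.norm_apply_le_norm ENNReal.top_ne_zero δ.2 t).trans (norm_snd_le δ))
                (norm_nonneg _) zero_le_one
            _ = ‖δ‖ := one_mul _
            _ ≤ δ₀ / 2 := hδhalf
      · rw [add_sub_cancel_left]
        exact hnorm
    have hmvt := Convex.norm_image_sub_le_of_norm_hasFDerivWithin_le'
      (f := G) (f' := D) (φ := D (x t, u t)) (C := c)
      (s := segment ℝ ((x t, u t) : (Fin n → ℝ) × (Fin d → ℝ)) ((x t, u t) + (δ.1 t, δ.2 t)))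
      (fun z hz => (hG z (hCssub (hseg z hz).1).2).hasFDerivWithinAt)
      (fun z hz => by
        have hd := hUCδ z (hseg z hz).1 (x t, u t) (hq t)
          (by rw [dist_eq_norm]; exact lt_of_le_of_lt (hseg z hz).2 hδδ₁)
        rw [dist_eq_norm] at hd
        exact hd.le)
      (convex_segment _ _) (left_mem_segment ℝ _ _) (right_mem_segment ℝ _ _)
    rw [add_sub_cancel_left] at hmvt
    exact hmvt.trans (mul_le_mul_of_nonneg_left (hwle t) hc.le)
  have hfd : ∀ (x : C₀(ℕ, Fin n → ℝ)) (u : lp (fun _ : ℕ => Fin d → ℝ) ⊤)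
      (hu : u ∈ Oset U1), fderiv ℝ T (x, u) = Lc x u hu := fun x u hu => (hHas x u hu).fderiv
  have hopen : IsOpen (Set.univ ×ˢ Oset U1 :
      Set (C₀(ℕ, Fin n → ℝ) × lp (fun _ : ℕ => Fin d → ℝ) ⊤)) :=
    isOpen_univ.prod (Oset_open hU1)
  -- continuity of the derivative
  have hcont : ContinuousOn (fderiv ℝ T) (Set.univ ×ˢ Oset U1) := by
    refine (Metric.continuousOn_iff (f := fderiv ℝ T)).mpr ?_
    rintro ⟨x, u⟩ hp ε hε
    have hu : u ∈ Oset U1 := hp.2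
    obtain ⟨δ₀, hδ₀, hthick⟩ := (Kcpt u).exists_thickening_subset_open hU1 hu
    set K := closure (Set.range fun t : ℕ => u t) with hK
    set K2 := cthickening (δ₀ / 2) K with hK2def
    have hK2cpt : IsCompact K2 := (Kcpt u).cthickening
    have hK2U1 : K2 ⊆ U1 :=
      (cthickening_subset_thickening' hδ₀ (half_lt_self hδ₀) K).trans hthick
    have hKK2 : K ⊆ K2 := self_subset_cthickening K
    have hCscpt : IsCompact (closedBall (0 : Fin n → ℝ) (‖x‖ + 1) ×ˢ K2) :=
      (isCompact_closedBall _ _).prod hK2cpt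
    have hCssub : closedBall (0 : Fin n → ℝ) (‖x‖ + 1) ×ˢ K2 ⊆ Set.univ ×ˢ U1 :=
      Set.prod_mono (Set.subset_univ _) hK2U1
    have hUC := hCscpt.uniformContinuousOn_of_continuous (hDc.mono hCssub)
    rw [Metric.uniformContinuousOn_iff] at hUC
    obtain ⟨δ₁, hδ₁, hUCδ⟩ := hUC (ε / 2) (half_pos hε)
    refine ⟨min (min 1 (δ₀ / 2)) δ₁, by positivity, ?_⟩
    rintro ⟨x', u'⟩ hp' hdist
    have hu' : u' ∈ Oset U1 := hp'.2
    rw [dist_eq_norm] at hdist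
    have hxx : ‖x' - x‖ ≤ ‖((x', u') : C₀(ℕ, Fin n → ℝ) × lp (fun _ : ℕ => Fin d → ℝ) ⊤)
        - (x, u)‖ := by exact norm_fst_le ((x', u') - (x, u))
    have huu : ‖u' - u‖ ≤ ‖((x', u') : C₀(ℕ, Fin n → ℝ) × lp (fun _ : ℕ => Fin d → ℝ) ⊤)
        - (x, u)‖ := by exact norm_snd_le ((x', u') - (x, u))
    have hd1 : ‖x' - x‖ < 1 :=
      lt_of_le_of_lt hxx (lt_of_lt_of_le hdist ((min_le_left _ _).trans (min_le_left _ _)))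
    have hdhalf : ‖u' - u‖ ≤ δ₀ / 2 :=
      huu.trans (le_of_lt (lt_of_lt_of_le hdist ((min_le_left _ _).trans (min_le_right _ _))))
    have hqmem : ∀ t : ℕ, ((x t, u t) : (Fin n → ℝ) × (Fin d → ℝ)) ∈
        closedBall (0 : Fin n → ℝ) (‖x‖ + 1) ×ˢ K2 := fun t =>
      ⟨by simp only [mem_closedBall, dist_zero_right]; exact (c0_apply_le x t).trans (by linarith),
        hKK2 (humem u t)⟩
    have hq'mem : ∀ t : ℕ, ((x' t, u' t) : (Fin n → ℝ) × (Fin d → ℝ)) ∈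
        closedBall (0 : Fin n → ℝ) (‖x‖ + 1) ×ˢ K2 := by
      intro t
      constructor
      · simp only [mem_closedBall, dist_zero_right]
        have h1 : ‖x' t‖ ≤ ‖x'‖ := c0_apply_le x' t
        have h2 : ‖x'‖ ≤ ‖x‖ + ‖x' - x‖ := by
          calc ‖x'‖ = ‖x + (x' - x)‖ := by rw [add_sub_cancel]
            _ ≤ ‖x‖ + ‖x' - x‖ := norm_add_le _ _
        linarith
      · refine mem_cthickening_of_dist_le _ (u t) _ _ (humem u t) ?_
        have : u' t - u t = (u' - u : lp (fun _ : ℕ => Fin d → ℝ) ⊤) t := by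
          rw [lp.coeFn_sub]; rfl
        rw [dist_eq_norm, this]
        exact (lp.norm_apply_le_norm ENNReal.top_ne_zero _ t).trans hdhalf
    have hDclose : ∀ t : ℕ, ‖D (x t, u t) - D (x' t, u' t)‖ ≤ ε / 2 := by
      intro t
      have hdd : dist ((x t, u t) : (Fin n → ℝ) × (Fin d → ℝ)) (x' t, u' t) < δ₁ := by
        rw [Prod.dist_eq]
        have h1 : dist (x t) (x' t) ≤ ‖x' - x‖ := by
          rw [dist_eq_norm, ← norm_neg, neg_sub]
          have : x' t - x t = (x' - x : C₀(ℕ, Fin n → ℝ)) t := by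
            rw [ZeroAtInftyContinuousMap.coe_sub]; rfl
          rw [this]
          exact c0_apply_le _ t
        have h2 : dist (u t) (u' t) ≤ ‖u' - u‖ := by
          rw [dist_eq_norm, ← norm_neg, neg_sub]
          have : u' t - u t = (u' - u : lp (fun _ : ℕ => Fin d → ℝ) ⊤) t := by
            rw [lp.coeFn_sub]; rfl
          rw [this]
          exact lp.norm_apply_le_norm ENNReal.top_ne_zero _ t
        have hmax : max (dist (x t) (x' t)) (dist (u t) (u' t)) ≤ ‖((x', u') :
            C₀(ℕ, Fin n → ℝ) × lp (fun _ : ℕ => Fin d → ℝ) ⊤) - (x, u)‖ :=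
          max_le (h1.trans hxx) (h2.trans huu)
        exact lt_of_le_of_lt hmax (lt_of_lt_of_le hdist (min_le_right _ _))
      have := hUCδ _ (hqmem t) _ (hq'mem t) hdd
      rw [dist_eq_norm] at this
      exact this.le
    rw [hfd x' u' hu', hfd x u hu]
    refine (dist_eq_norm (Lc x' u' hu') (Lc x u hu)).trans_lt ?_
    refine lt_of_le_of_lt ?_ (half_lt_self hε)
    refine ContinuousLinearMap.opNorm_le_bound _ (by positivity) fun δ => ?_
    refine c0_norm_le (by positivity) fun t => ?_
    have hval : ((Lc x' u' hu' - Lc x u hu) δ) t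
        = (D (x t, u t) - D (x' t, u' t)) (δ.1 t, δ.2 t) := by
      simp only [ContinuousLinearMap.sub_apply, ZeroAtInftyContinuousMap.coe_sub, Pi.sub_apply]
      rw [hLc x' u' hu' δ t, hLc x u hu δ t]
      abel
    rw [hval]
    have hwle : ‖((δ.1 t, δ.2 t) : (Fin n → ℝ) × (Fin d → ℝ))‖ ≤ ‖δ‖ := by
      rw [Prod.norm_def]
      exact max_le ((c0_apply_le δ.1 t).trans (norm_fst_le δ))
        ((lp.norm_apply_le_norm ENNReal.top_ne_zero δ.2 t).trans (norm_snd_le δ))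
    calc ‖(D (x t, u t) - D (x' t, u' t)) (δ.1 t, δ.2 t)‖
        ≤ ‖D (x t, u t) - D (x' t, u' t)‖ * ‖((δ.1 t, δ.2 t) : (Fin n → ℝ) × (Fin d → ℝ))‖ :=
          ContinuousLinearMap.le_opNorm _ _
      _ ≤ (ε / 2) * ‖δ‖ := mul_le_mul (hDclose t) hwle (norm_nonneg _) (by positivity)
  refine ⟨T, hTval, ?_, ?_⟩
  · rw [show (1 : WithTop ℕ∞) = 0 + 1 from rfl, contDiffOn_succ_iff_fderiv_of_isOpen hopen]
    refine ⟨?_, ?_, ?_⟩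
    · rintro ⟨x, u⟩ hp
      exact (hHas x u hp.2).differentiableAt.differentiableWithinAt
    · intro h
      exact absurd h (by simp)
    · rw [contDiffOn_zero]
      exact hcont
  · intro x u hu δx δu t
    rw [hfd x u hu]
    exact hLc x u hu (δx, δu) t

/-- Corollary 3.8, smoothness of the dynamics operator. -/
theorem stmt_4 {n d : ℕ}
    (U : Set (Fin d → ℝ)) (hUne : U.Nonempty) (hUcl : IsClosed U)
    (f : (Fin n → ℝ) → (Fin d → ℝ) → (Fin n → ℝ))
    -- (i)
    (U1 : Set (Fin d → ℝ)) (hU1open : IsOpen U1) (hUU1 : U ⊆ U1)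
    (hf : ContDiffOn ℝ 1 (fun q : (Fin n → ℝ) × (Fin d → ℝ) => f q.1 q.2) (Set.univ ×ˢ U1))
    -- (ii)
    (u0 : Fin d → ℝ) (hu0 : u0 ∈ U) (hf0 : f 0 u0 = 0) (hstar : StarConvex ℝ u0 U)
    -- (iii)
    (hlim : ∀ B ⊆ U, B.Nonempty → IsBounded B →
      ∀ ε > (0 : ℝ), ∃ δ > (0 : ℝ), ∀ x : Fin n → ℝ, ‖x‖ < δ → ∀ u ∈ B,
        ‖fderiv ℝ (fun q : (Fin n → ℝ) × (Fin d → ℝ) => f q.1 q.2) (x, u)‖ < ε) :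
    ∃ O : Set (lp (fun _ : ℕ => Fin d → ℝ) ⊤), IsOpen O ∧
      {u : lp (fun _ : ℕ => Fin d → ℝ) ⊤ | ∀ t : ℕ, u t ∈ U} ⊆ O ∧
      ∃ T : C₀(ℕ, Fin n → ℝ) × lp (fun _ : ℕ => Fin d → ℝ) ⊤ → C₀(ℕ, Fin n → ℝ),
        -- T is the operator 𝒯 on c₀(ℕ, ℝⁿ) × ℓ∞(ℕ, U)
        (∀ (x : C₀(ℕ, Fin n → ℝ)) (u : lp (fun _ : ℕ => Fin d → ℝ) ⊤),
          (∀ t : ℕ, u t ∈ U) → ∀ t : ℕ, T (x, u) t = x (t + 1) - f (x t) (u t)) ∧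
        -- T is of class C¹
        ContDiffOn ℝ 1 T (Set.univ ×ˢ O) ∧
        -- formula for the differential
        (∀ (x : C₀(ℕ, Fin n → ℝ)) (u : lp (fun _ : ℕ => Fin d → ℝ) ⊤),
          (∀ t : ℕ, u t ∈ U) →
          ∀ (δx : C₀(ℕ, Fin n → ℝ)) (δu : lp (fun _ : ℕ => Fin d → ℝ) ⊤), ∀ t : ℕ,
            fderiv ℝ T (x, u) (δx, δu) t
              = δx (t + 1) - fderiv ℝ (fun y => f y (u t)) (x t) (δx t)
                - fderiv ℝ (fun v => f (x t) v) (u t) (δu t)) := by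
  classical
  set F : (Fin n → ℝ) × (Fin d → ℝ) → (Fin n → ℝ) := fun q => f q.1 q.2 with hF
  set DF : (Fin n → ℝ) × (Fin d → ℝ) → ((Fin n → ℝ) × (Fin d → ℝ)) →L[ℝ] (Fin n → ℝ) :=
    fun q => fderiv ℝ F q with hDF
  have hopen : IsOpen ((Set.univ : Set (Fin n → ℝ)) ×ˢ U1) := isOpen_univ.prod hU1open
  have hFd : ∀ q : (Fin n → ℝ) × (Fin d → ℝ), q.2 ∈ U1 → HasFDerivAt F (DF q) q := by
    intro q hq
    have hmem : q ∈ Set.univ ×ˢ U1 := ⟨trivial, hq⟩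
    have := (hf.differentiableOn one_ne_zero).differentiableAt (hopen.mem_nhds hmem)
    exact this.hasFDerivAt
  have hDFc : ContinuousOn DF (Set.univ ×ˢ U1) :=
    hf.continuousOn_fderiv_of_isOpen hopen le_rfl
  set j : ((Fin n → ℝ) × (Fin d → ℝ)) →L[ℝ] ((Fin n → ℝ) × (Fin d → ℝ)) :=
    (0 : ((Fin n → ℝ) × (Fin d → ℝ)) →L[ℝ] (Fin n → ℝ)).prod
      (ContinuousLinearMap.snd ℝ (Fin n → ℝ) (Fin d → ℝ)) with hj
  have hjval : ∀ q : (Fin n → ℝ) × (Fin d → ℝ), j q = (0, q.2) := fun q => rfl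
  set G : (Fin n → ℝ) × (Fin d → ℝ) → (Fin n → ℝ) := fun q => f q.1 q.2 - f 0 q.2 with hG
  set D : (Fin n → ℝ) × (Fin d → ℝ) → ((Fin n → ℝ) × (Fin d → ℝ)) →L[ℝ] (Fin n → ℝ) :=
    fun q => DF q - (DF (0, q.2)).comp j with hD
  have hGd : ∀ q : (Fin n → ℝ) × (Fin d → ℝ), q.2 ∈ U1 → HasFDerivAt G (D q) q := by
    intro q hq
    have h2 : HasFDerivAt (fun p : (Fin n → ℝ) × (Fin d → ℝ) => F (j p))
        ((DF (0, q.2)).comp j) q := by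
      have := (hFd (0, q.2) hq).comp q (j.hasFDerivAt (x := q))
      simpa [hjval] using this
    exact (hFd q hq).sub h2
  have hDc : ContinuousOn D (Set.univ ×ˢ U1) := by
    refine ContinuousOn.sub hDFc ?_
    refine ContinuousOn.clm_comp ?_ continuousOn_const
    refine ContinuousOn.comp hDFc ?_ ?_
    · exact (continuous_const.prodMk continuous_snd).continuousOn
    · intro q hq
      exact ⟨trivial, hq.2⟩
  have hG0 : ∀ w, G (0, w) = 0 := fun w => sub_self _
  have hD0 : ∀ w ∈ U1, ∀ b : Fin d → ℝ, D (0, w) (0, b) = 0 := by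
    intro w hw b
    simp only [hD, ContinuousLinearMap.sub_apply, ContinuousLinearMap.comp_apply, hjval]
    exact sub_self _
  have hDF0 : ∀ v ∈ U, DF (0, v) = 0 := by
    intro v hv
    have hle : ‖DF (0, v)‖ ≤ 0 := by
      by_contra h
      push_neg at h
      obtain ⟨δ, hδ, hb⟩ := hlim {v} (Set.singleton_subset_iff.2 hv) ⟨v, rfl⟩
        isBounded_singleton ‖DF (0, v)‖ h
      exact absurd (hb 0 (by simpa using hδ) v rfl) (lt_irrefl _)
    exact norm_le_zero_iff.mp hle
  have hf00 : ∀ v ∈ U, f 0 v = 0 := by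
    intro v hv
    have hmvt := Convex.norm_image_sub_le_of_norm_hasFDerivWithin_le
      (f := fun w : Fin d → ℝ => f 0 w)
      (f' := fun w => (DF (0, w)).comp
        ((0 : (Fin d → ℝ) →L[ℝ] (Fin n → ℝ)).prod (ContinuousLinearMap.id ℝ (Fin d → ℝ))))
      (C := 0) (s := segment ℝ u0 v) (x := u0) (y := v)
      ?_ ?_ (convex_segment _ _) (left_mem_segment ℝ _ _) (right_mem_segment ℝ _ _)
    · have h1 : ‖f 0 v - f 0 u0‖ ≤ 0 := by simpa using hmvt
      have h2 := norm_le_zero_iff.mp h1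
      rw [sub_eq_zero] at h2
      rw [h2, hf0]
    · intro w hw
      have hwU : w ∈ U := hstar.segment_subset hv hw
      have : HasFDerivAt (fun w : Fin d → ℝ => F (0, w))
          ((DF (0, w)).comp
            ((0 : (Fin d → ℝ) →L[ℝ] (Fin n → ℝ)).prod
              (ContinuousLinearMap.id ℝ (Fin d → ℝ)))) w :=
        (hFd (0, w) (hUU1 hwU)).comp w
          ((hasFDerivAt_const (0 : Fin n → ℝ) w).prodMk (hasFDerivAt_id w))
      exact this.hasFDerivWithinAt
    · intro w hw
      have hwU : w ∈ U := hstar.segment_subset hv hw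
      simp only [hDF0 w hwU, ContinuousLinearMap.zero_comp, norm_zero, le_refl]
  -- apply the key theorem
  obtain ⟨T, hT1, hT2, hT3⟩ := key_theorem hU1open G D hGd hDc hG0 hD0
  have hOsub : {u : lp (fun _ : ℕ => Fin d → ℝ) ⊤ | ∀ t : ℕ, u t ∈ U} ⊆ Oset U1 := by
    intro u hu
    refine (closure_minimal ?_ hUcl).trans hUU1
    rintro - ⟨t, rfl⟩
    exact hu t
  refine ⟨Oset U1, Oset_open hU1open, hOsub, T, ?_, hT2, ?_⟩
  · intro x u huU t
    rw [hT1 x u (hOsub huU) t]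
    show x (t + 1) - (f (x t) (u t) - f 0 (u t)) = x (t + 1) - f (x t) (u t)
    rw [hf00 (u t) (huU t), sub_zero]
  · intro x u huU δx δu t
    rw [hT3 x u (hOsub huU) δx δu t]
    have hb1 : u t ∈ U1 := hUU1 (huU t)
    -- partial derivatives
    have hp1 : HasFDerivAt (fun y : Fin n → ℝ => f y (u t))
        ((DF (x t, u t)).comp
          ((ContinuousLinearMap.id ℝ (Fin n → ℝ)).prod
            (0 : (Fin n → ℝ) →L[ℝ] (Fin d → ℝ)))) (x t) :=
      (hFd (x t, u t) hb1).comp (x t) (f := fun y => (y, u t)) ((hasFDerivAt_id (x t)).prodMk (hasFDerivAt_const (u t) _))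
    have hp2 : HasFDerivAt (fun v : Fin d → ℝ => f (x t) v)
        ((DF (x t, u t)).comp
          ((0 : (Fin d → ℝ) →L[ℝ] (Fin n → ℝ)).prod
            (ContinuousLinearMap.id ℝ (Fin d → ℝ)))) (u t) :=
      (hFd (x t, u t) hb1).comp (u t) ((hasFDerivAt_const (x t) _).prodMk (hasFDerivAt_id (u t)))
    have he1 : fderiv ℝ (fun y => f y (u t)) (x t) (δx t) = DF (x t, u t) (δx t, 0) := by
      rw [hp1.fderiv]
      rfl
    have he2 : fderiv ℝ (fun v => f (x t) v) (u t) (δu t) = DF (x t, u t) (0, δu t) := by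
      rw [hp2.fderiv]
      rfl
    have he3 : D (x t, u t) (δx t, δu t)
        = DF (x t, u t) (δx t, 0) + DF (x t, u t) (0, δu t) := by
      simp only [hD, ContinuousLinearMap.sub_apply, ContinuousLinearMap.comp_apply, hjval]
      rw [hDF0 (u t) (huU t)]
      simp only [ContinuousLinearMap.zero_apply, sub_zero]
      rw [show ((δx t, δu t) : (Fin n → ℝ) × (Fin d → ℝ)) = (δx t, 0) + (0, δu t) by
        simp [Prod.ext_iff]]
      exact (DF (x t, u t)).map_add _ _
    rw [he1, he2, he3, sub_add_eq_sub_sub]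

end Aux
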